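/- Let T₀ : ℓ₁ → ({0} × c₀, ϑ) be defined by T₀(x) = (0,x), where ϑ(ξ,x) = ω(|ξ|, ‖x‖_∞) with ω the rotated γ-norm on ℝ² (0 < γ < 1). Then e_k(T₀) = 2^{1/γ−1} for all k ∈ ℕ. Moreover, for the embedding T_∞ : ℓ₁ → (ℝ × ℓ_∞, ϑ), T_∞(x) = (0,x), one has 1/2 ≤ e_k(T_∞) ≤ 1/2 + 1/2^{k−1} for all k ≥ 2. Consequently, with ι the natural metric injection ({0}×c₀, ϑ) → (ℝ×ℓ_∞, ϑ), the constant 2^{1/γ} in the inequality e_k(T) ≤ 2^{1/γ} e_k(ιT) cannot be reduced. -/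
import Mathlib

noncomputable section

/-- The rotated γ-norm `ω` on `ℝ²`. -/
def omg (γ : ℝ) : ℝ × ℝ → ℝ := fun x =>
  if |x.2| < |x.1| then |x.1|
  else (|(x.1 + x.2)/2| ^ γ + |(x.1 - x.2)/2| ^ γ) ^ (1/γ)

/-- The γ-norm `ϑ(ξ, x) = ω(|ξ|, ‖x‖_∞)` on `ℝ × ℓ_∞`. -/
def theta (γ : ℝ) : ℝ × (ℕ → ℝ) → ℝ := fun z => omg γ (|z.1|, ⨆ i, |z.2 i|)

/-- Membership in `ℓ₁`. -/
def Meml1 (x : ℕ → ℝ) : Prop := Summable fun i => |x i|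

/-- The `ℓ₁` norm. -/
def l1Norm (x : ℕ → ℝ) : ℝ := ∑' i, |x i|

/-- Membership in `c₀`. -/
def Memc0 (x : ℕ → ℝ) : Prop := Filter.Tendsto x Filter.atTop (nhds 0)

/-- Membership in `ℓ_∞`. -/
def Memlinf (x : ℕ → ℝ) : Prop := BddAbove (Set.range fun i => |x i|)

/-- The `k`-th entropy number of `T₀ : ℓ₁ → ({0} × c₀, ϑ)`, `T₀ x = (0, x)`. -/
def eT0 (γ : ℝ) (k : ℕ) : ℝ :=
  sInf {ε : ℝ | 0 < ε ∧ ∃ c : Fin (2 ^ (k - 1)) → (ℕ → ℝ), (∀ i, Memc0 (c i)) ∧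
    ∀ x : ℕ → ℝ, Meml1 x → l1Norm x ≤ 1 → ∃ i, theta γ (0, x - c i) ≤ ε}

/-- The `k`-th entropy number of `T_∞ : ℓ₁ → (ℝ × ℓ_∞, ϑ)`, `T_∞ x = (0, x)`. -/
def eTinf (γ : ℝ) (k : ℕ) : ℝ :=
  sInf {ε : ℝ | 0 < ε ∧ ∃ c : Fin (2 ^ (k - 1)) → ℝ × (ℕ → ℝ), (∀ i, Memlinf (c i).2) ∧
    ∀ x : ℕ → ℝ, Meml1 x → l1Norm x ≤ 1 → ∃ i, theta γ ((0, x) - c i) ≤ ε}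

lemma omg_zero_left {γ : ℝ} (hγ0 : 0 < γ) {s : ℝ} (hs : 0 ≤ s) :
    omg γ (0, s) = 2 ^ (1/γ - 1) * s := by
  have hγ' : γ ≠ 0 := ne_of_gt hγ0
  have h2 : (0:ℝ) ≤ s/2 := by linarith
  unfold omg
  rw [if_neg (by simp [not_lt, abs_nonneg])]
  have e1 : ((0:ℝ) + s)/2 = s/2 := by ring
  have e2 : ((0:ℝ) - s)/2 = -(s/2) := by ring
  simp only []
  rw [e1, e2, abs_neg, abs_of_nonneg h2]
  have e3 : (s/2)^γ + (s/2)^γ = 2 * (s/2)^γ := by ring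
  rw [e3, Real.mul_rpow (by norm_num) (Real.rpow_nonneg h2 γ),
    ← Real.rpow_mul h2, mul_one_div_cancel hγ', Real.rpow_one,
    Real.rpow_sub two_pos, Real.rpow_one]
  ring

lemma omg_eq_of_le {γ : ℝ} (hγ0 : 0 < γ) {a s : ℝ} (hs : 0 ≤ s) (hsa : s ≤ a) :
    omg γ (a, s) = a := by
  have ha : 0 ≤ a := hs.trans hsa
  unfold omg
  rcases lt_or_eq_of_le hsa with h | h
  · rw [if_pos (by simpa [abs_of_nonneg hs, abs_of_nonneg ha] using h)]
    exact abs_of_nonneg ha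
  · subst h
    rw [if_neg (by simp)]
    have e1 : (s + s)/2 = s := by ring
    have e2 : (s - s)/2 = 0 := by ring
    simp only []
    rw [e1, e2, abs_zero, Real.zero_rpow (ne_of_gt hγ0), add_zero, abs_of_nonneg hs,
      ← Real.rpow_mul hs, mul_one_div_cancel (ne_of_gt hγ0), Real.rpow_one]

lemma le_omg {γ : ℝ} (hγ0 : 0 < γ) (hγ1 : γ ≤ 1) {a b : ℝ} (ha : 0 ≤ a) (hb : 0 ≤ b) :
    b ≤ omg γ (a, b) := by
  unfold omg
  simp only []
  split_ifs with h
  · rw [abs_of_nonneg hb, abs_of_nonneg ha] at h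
    rw [abs_of_nonneg ha]
    exact h.le
  · rw [abs_of_nonneg hb, abs_of_nonneg ha, not_lt] at h
    have h2 : |(a + b)/2| = (a+b)/2 := abs_of_nonneg (by linarith)
    have h3 : |(a - b)/2| = (b-a)/2 := by rw [abs_of_nonpos (by linarith)]; ring
    rw [h2, h3]
    have hu : (0:ℝ) ≤ (a+b)/2 := by linarith
    have hv : (0:ℝ) ≤ (b-a)/2 := by linarith
    have key : ((a+b)/2 + (b-a)/2) ^ γ ≤ ((a+b)/2)^γ + ((b-a)/2)^γ := by
      lift ((a+b)/2) to NNReal using hu with u hu'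
      lift ((b-a)/2) to NNReal using hv with v hv'
      exact_mod_cast NNReal.rpow_add_le_add_rpow u v hγ0.le hγ1
    have hb' : (a+b)/2 + (b-a)/2 = b := by ring
    rw [hb'] at key
    calc b = (b ^ γ) ^ (1/γ) := by
            rw [← Real.rpow_mul hb, mul_one_div_cancel (ne_of_gt hγ0), Real.rpow_one]
    _ ≤ (((a+b)/2)^γ + ((b-a)/2)^γ) ^ (1/γ) :=
        Real.rpow_le_rpow (Real.rpow_nonneg hb γ) key (by positivity)

lemma grid_cover (N : ℕ) (hN : 1 ≤ N) (d : ℝ) (hd : |d| ≤ 1/2) :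
    ∃ j : Fin N, |d - (2*(j:ℝ) + 1 - N)/N| ≤ 1/N := by
  have hNpos : (0:ℝ) < N := by exact_mod_cast hN
  set u : ℝ := (d + 1) * N / 2 with hu
  obtain ⟨hd1, hd2⟩ := abs_le.1 hd
  have hu0 : 0 ≤ u := div_nonneg (mul_nonneg (by linarith) hNpos.le) (by norm_num)
  have huN : u < N := by
    rw [hu, div_lt_iff₀ (by norm_num : (0:ℝ) < 2)]
    nlinarith
  have hjN : ⌊u⌋₊ < N := by
    have := (Nat.floor_le hu0).trans_lt huN
    exact_mod_cast this
  have h1 : (⌊u⌋₊ : ℝ) ≤ u := Nat.floor_le hu0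
  have h2 : u < ⌊u⌋₊ + 1 := Nat.lt_floor_add_one u
  refine ⟨⟨⌊u⌋₊, hjN⟩, ?_⟩
  have heq : d - (2*((⌊u⌋₊:ℕ):ℝ) + 1 - N)/N = (2*u - (2*(⌊u⌋₊:ℝ) + 1))/N := by
    field_simp [hu]
    ring
  show |d - (2*((⌊u⌋₊:ℕ):ℝ) + 1 - N)/N| ≤ 1/N
  rw [heq, abs_div, abs_of_pos hNpos]
  have hnum : |2*u - (2*(⌊u⌋₊:ℝ) + 1)| ≤ 1 := by
    rw [abs_le]; constructor <;> nlinarith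
  gcongr

lemma cover (N : ℕ) (hN : 1 ≤ N) (x : ℕ → ℝ) (hx : Meml1 x) (hx1 : l1Norm x ≤ 1) :
    ∃ j : Fin N, ∀ i, |x i - (2*(j:ℝ) + 1 - N)/N| ≤ 1/2 + 1/N := by
  have hNpos : (0:ℝ) < N := by exact_mod_cast hN
  have habs : ∀ i, |x i| ≤ 1 :=
    fun i => (Summable.le_tsum hx i fun j _ => abs_nonneg _).trans hx1
  by_cases hbig : ∃ i, 1/2 < |x i|
  · obtain ⟨i₀, hi₀⟩ := hbig
    have hsmall : ∀ i, i ≠ i₀ → |x i| ≤ 1 - |x i₀| := by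
      intro i hne
      have h := Summable.sum_le_tsum ({i, i₀} : Finset ℕ) (fun j _ => abs_nonneg _) hx
      rw [Finset.sum_pair hne] at h
      have : |x i| + |x i₀| ≤ 1 := h.trans hx1
      linarith
    set d : ℝ := if 0 ≤ x i₀ then x i₀ - 1/2 else x i₀ + 1/2 with hd
    have hB : |x i₀ - d| ≤ 1/2 := by
      rw [hd]; split_ifs with h <;> rw [abs_le] <;> constructor <;> linarith
    have hC : |d| = |x i₀| - 1/2 := by
      rw [hd]; split_ifs with h
      · rw [abs_of_nonneg h] at hi₀ ⊢
        rw [abs_of_nonneg (by linarith)]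
      · push_neg at h
        rw [abs_of_neg h] at hi₀ ⊢
        rw [abs_of_neg (by linarith)]
        ring
    have hdle : |d| ≤ 1/2 := by
      rw [hC]; linarith [habs i₀]
    obtain ⟨j, hj⟩ := grid_cover N hN d hdle
    set c : ℝ := (2*(j:ℝ) + 1 - N)/N with hc
    have hcd : |c| ≤ |d| + 1/N := by
      calc |c| = |(c - d) + d| := by rw [show (c - d) + d = c by ring]
      _ ≤ |c - d| + |d| := abs_add_le _ _
      _ = |d - c| + |d| := by rw [abs_sub_comm]
      _ ≤ |d| + 1/N := by linarith [hj]
    refine ⟨j, fun i => ?_⟩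
    by_cases hii : i = i₀
    · subst hii
      calc |x i - c| = |(x i - d) + (d - c)| := by
            rw [show (x i - d) + (d - c) = x i - c by ring]
      _ ≤ |x i - d| + |d - c| := abs_add_le _ _
      _ ≤ 1/2 + 1/N := add_le_add hB hj
    · calc |x i - c| ≤ |x i| + |c| := abs_sub _ _
      _ ≤ (1 - |x i₀|) + (|d| + 1/N) := add_le_add (hsmall i hii) hcd
      _ = 1/2 + 1/N := by rw [hC]; ring
  · push_neg at hbig
    obtain ⟨j, hj⟩ := grid_cover N hN 0 (by norm_num)
    rw [zero_sub, abs_neg] at hj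
    refine ⟨j, fun i => ?_⟩
    calc |x i - (2*(j:ℝ) + 1 - N)/N| ≤ |x i| + |(2*(j:ℝ) + 1 - N)/N| := abs_sub _ _
    _ ≤ 1/2 + 1/N := add_le_add (hbig i) hj

theorem metric_injection_constant_sharp (γ : ℝ) (hγ0 : 0 < γ) (hγ1 : γ < 1) :
    (∀ k : ℕ, 1 ≤ k → eT0 γ k = (2:ℝ) ^ (1/γ - 1)) ∧
    (∀ k : ℕ, 2 ≤ k → 1/2 ≤ eTinf γ k ∧ eTinf γ k ≤ 1/2 + 1 / 2 ^ (k - 1)) ∧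
    (∀ α : ℝ, 0 < α → (∀ k : ℕ, 1 ≤ k → eT0 γ k ≤ α * eTinf γ k) →
      (2:ℝ) ^ (1/γ) ≤ α) := by
  have hγ' : γ ≠ 0 := ne_of_gt hγ0
  set M : ℝ := (2:ℝ) ^ (1/γ - 1) with hM
  have hMpos : 0 < M := Real.rpow_pos_of_pos two_pos _
  -- Part 1
  have mem0 : ∀ k : ℕ, 0 < M ∧ ∃ c : Fin (2 ^ (k - 1)) → (ℕ → ℝ), (∀ i, Memc0 (c i)) ∧
      ∀ x : ℕ → ℝ, Meml1 x → l1Norm x ≤ 1 → ∃ i, theta γ (0, x - c i) ≤ M := by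
    intro k
    refine ⟨hMpos, fun _ => 0, fun _ => tendsto_const_nhds, fun x hx hx1 => ?_⟩
    refine ⟨⟨0, Nat.two_pow_pos _⟩, ?_⟩
    have hbl : ∀ i, |x i| ≤ 1 := fun i => (Summable.le_tsum hx i fun j _ => abs_nonneg _).trans hx1
    have hbdd : BddAbove (Set.range fun i => |(x - 0) i|) := by
      refine ⟨1, ?_⟩; rintro _ ⟨i, rfl⟩; simpa using hbl i
    have hsup0 : 0 ≤ ⨆ i, |(x - 0) i| := le_trans (abs_nonneg _) (le_ciSup hbdd 0)
    have hsup1 : (⨆ i, |(x - 0) i|) ≤ 1 := ciSup_le fun i => by simpa using hbl i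
    show omg γ (|(0:ℝ)|, ⨆ i, |(x - 0) i|) ≤ M
    rw [abs_zero, omg_zero_left hγ0 hsup0]
    calc M * (⨆ i, |(x - 0) i|) ≤ M * 1 := mul_le_mul_of_nonneg_left hsup1 hMpos.le
    _ = M := mul_one M
  have lb0 : ∀ k : ℕ, ∀ ε : ℝ, (0 < ε ∧ ∃ c : Fin (2 ^ (k - 1)) → (ℕ → ℝ),
      (∀ i, Memc0 (c i)) ∧ ∀ x : ℕ → ℝ, Meml1 x → l1Norm x ≤ 1 →
      ∃ i, theta γ (0, x - c i) ≤ ε) → M ≤ ε := by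
    intro k ε hε
    obtain ⟨hεpos, c, hc0, hcov⟩ := hε
    by_contra hlt
    push_neg at hlt
    set δ : ℝ := (M - ε)/(2*M) with hδ
    have hδpos : 0 < δ := div_pos (by linarith) (by linarith)
    have hev : ∀ᶠ n in Filter.atTop, ∀ i, |c i n| < δ := by
      rw [Filter.eventually_all]
      intro i
      have h := (hc0 i).abs
      rw [abs_zero] at h
      exact h.eventually_lt_const hδpos
    obtain ⟨n, hn⟩ := hev.exists
    set x : ℕ → ℝ := fun j => if j = n then 1 else 0 with hxdef
    have hxabs : (fun j => |x j|) = fun j => if j = n then (1:ℝ) else 0 := by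
      funext j; by_cases h : j = n <;> simp [hxdef, h]
    have hxsum : HasSum (fun j => |x j|) 1 := by
      rw [hxabs]; exact hasSum_ite_eq n 1
    obtain ⟨i, hi⟩ := hcov x hxsum.summable hxsum.tsum_eq.le
    have hBi : BddAbove (Set.range fun j => |c i j|) := by
      have h := (hc0 i).abs
      rw [abs_zero] at h
      exact h.bddAbove_range
    obtain ⟨B, hB⟩ := hBi
    have hbdd : BddAbove (Set.range fun j => |(x - c i) j|) := by
      refine ⟨1 + B, ?_⟩
      rintro _ ⟨j, rfl⟩
      have h1 : |x j - c i j| ≤ |x j| + |c i j| := abs_sub _ _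
      have h2 : |x j| ≤ 1 := by by_cases h : j = n <;> simp [hxdef, h]
      have h3 : |c i j| ≤ B := hB (Set.mem_range_self j)
      show |(x - c i) j| ≤ 1 + B
      rw [Pi.sub_apply]; linarith
    have hsn : 1 - δ ≤ ⨆ j, |(x - c i) j| := by
      have h1 : (1:ℝ) - δ ≤ |(x - c i) n| := by
        have h2 : |c i n| < δ := hn i
        have h3 : (x - c i) n = 1 - c i n := by simp [hxdef]
        rw [h3]
        have h4 := abs_sub_abs_le_abs_sub (1:ℝ) (c i n)
        rw [abs_one] at h4
        linarith
      exact h1.trans (le_ciSup hbdd n)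
    have hsup0 : 0 ≤ ⨆ j, |(x - c i) j| := le_trans (abs_nonneg _) (le_ciSup hbdd 0)
    have hθ : theta γ (0, x - c i) = M * ⨆ j, |(x - c i) j| := by
      show omg γ (|(0:ℝ)|, ⨆ j, |(x - c i) j|) = _
      rw [abs_zero, omg_zero_left hγ0 hsup0]
    have hfin : M * (1 - δ) ≤ ε := by
      calc M * (1 - δ) ≤ M * ⨆ j, |(x - c i) j| :=
            mul_le_mul_of_nonneg_left hsn hMpos.le
      _ = theta γ (0, x - c i) := hθ.symm
      _ ≤ ε := hi
    have heq2 : M * (1 - δ) = (M + ε)/2 := by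
      rw [hδ]; field_simp; ring
    rw [heq2] at hfin
    linarith
  have part1 : ∀ k : ℕ, eT0 γ k = M := by
    intro k
    unfold eT0
    exact le_antisymm (csInf_le ⟨0, fun ε hε => hε.1.le⟩ (mem0 k))
      (le_csInf ⟨M, mem0 k⟩ fun ε hε => lb0 k ε hε)
  -- Part 2
  have memInf : ∀ k : ℕ, 0 < (1/2 + 1/2^(k-1) : ℝ) ∧
      ∃ c : Fin (2 ^ (k - 1)) → ℝ × (ℕ → ℝ), (∀ i, Memlinf (c i).2) ∧
      ∀ x : ℕ → ℝ, Meml1 x → l1Norm x ≤ 1 →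
      ∃ i, theta γ ((0, x) - c i) ≤ (1/2 + 1/2^(k-1) : ℝ) := by
    intro k
    have hN1 : 1 ≤ 2^(k-1) := Nat.one_le_two_pow
    have hNcast : (((2^(k-1) : ℕ)):ℝ) = 2^(k-1) := by push_cast; ring
    refine ⟨by positivity, fun j => ((1/2 + 1/2^(k-1) : ℝ),
      fun _ => (2*(j:ℝ) + 1 - (2^(k-1):ℕ))/(2^(k-1):ℕ)), fun i => ?_, ?_⟩
    · exact ⟨|(2*(i:ℝ) + 1 - (2^(k-1):ℕ))/(2^(k-1):ℕ)|,
        by rintro _ ⟨m, rfl⟩; exact le_rfl⟩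
    intro x hx hx1
    obtain ⟨j, hj⟩ := cover (2^(k-1)) hN1 x hx hx1
    refine ⟨j, ?_⟩
    have hle : ∀ i, |x i - (2*(j:ℝ) + 1 - (2^(k-1):ℕ))/(2^(k-1):ℕ)| ≤
        (1/2 + 1/2^(k-1) : ℝ) := by
      intro i
      have := hj i
      rw [hNcast] at this ⊢
      exact this
    have hbdd : BddAbove (Set.range fun i =>
        |x i - (2*(j:ℝ) + 1 - (2^(k-1):ℕ))/(2^(k-1):ℕ)|) :=
      ⟨_, by rintro _ ⟨i, rfl⟩; exact hle i⟩
    have hsup0 : 0 ≤ ⨆ i, |x i - (2*(j:ℝ) + 1 - (2^(k-1):ℕ))/(2^(k-1):ℕ)| :=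
      le_trans (abs_nonneg _) (le_ciSup hbdd 0)
    have hsup1 : (⨆ i, |x i - (2*(j:ℝ) + 1 - (2^(k-1):ℕ))/(2^(k-1):ℕ)|) ≤
        (1/2 + 1/2^(k-1) : ℝ) := ciSup_le hle
    unfold theta
    simp only [Prod.fst_sub, Prod.snd_sub, Pi.sub_apply, zero_sub, abs_neg]
    rw [abs_of_pos (by positivity), omg_eq_of_le hγ0 hsup0 hsup1]
  have lbInf : ∀ k : ℕ, ∀ ε : ℝ, (0 < ε ∧ ∃ c : Fin (2 ^ (k - 1)) → ℝ × (ℕ → ℝ),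
      (∀ i, Memlinf (c i).2) ∧ ∀ x : ℕ → ℝ, Meml1 x → l1Norm x ≤ 1 →
      ∃ i, theta γ ((0, x) - c i) ≤ ε) → 1/2 ≤ ε := by
    intro k ε hε
    obtain ⟨hεpos, c, hlinf, hcov⟩ := hε
    have hE : ∀ n : ℕ, ∃ i, theta γ ((0, fun j => if j = n then (1:ℝ) else 0) - c i) ≤ ε := by
      intro n
      have hxabs : (fun j => |if j = n then (1:ℝ) else 0|) =
          fun j => if j = n then (1:ℝ) else 0 := by
        funext j; by_cases h : j = n <;> simp [h]
      have hxsum : HasSum (fun j => |if j = n then (1:ℝ) else 0|) 1 := by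
        rw [hxabs]; exact hasSum_ite_eq n 1
      exact hcov _ hxsum.summable hxsum.tsum_eq.le
    choose f hf using hE
    have key : ∀ n t : ℕ, |(if t = n then (1:ℝ) else 0) - (c (f n)).2 t| ≤ ε := by
      intro n t
      obtain ⟨B, hB⟩ := hlinf (f n)
      have hbdd : BddAbove (Set.range fun j =>
          |(if j = n then (1:ℝ) else 0) - (c (f n)).2 j|) := by
        refine ⟨1 + B, ?_⟩
        rintro _ ⟨j, rfl⟩
        have h1 := abs_sub (if j = n then (1:ℝ) else 0) ((c (f n)).2 j)
        have h2 : |if j = n then (1:ℝ) else 0| ≤ 1 := by by_cases h : j = n <;> simp [h]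
        have h3 : |(c (f n)).2 j| ≤ B := hB (Set.mem_range_self j)
        linarith
      have hsup0 : 0 ≤ ⨆ j, |(if j = n then (1:ℝ) else 0) - (c (f n)).2 j| :=
        le_trans (abs_nonneg _) (le_ciSup hbdd 0)
      have hθ : (⨆ j, |(if j = n then (1:ℝ) else 0) - (c (f n)).2 j|) ≤
          theta γ ((0, fun j => if j = n then (1:ℝ) else 0) - c (f n)) := by
        unfold theta
        simp only [Prod.fst_sub, Prod.snd_sub, Pi.sub_apply, zero_sub, abs_neg]
        exact le_omg hγ0 hγ1.le (abs_nonneg _) hsup0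
      exact le_trans (le_trans (le_ciSup hbdd t) hθ) (hf n)
    obtain ⟨n, m, hnm, hfe⟩ := Fintype.exists_ne_map_eq_of_card_lt
      (fun t : Fin (2^(k-1) + 1) => f t.val) (by simp)
    have hvne : (n:ℕ) ≠ (m:ℕ) := fun h => hnm (Fin.val_injective h)
    have h1 := key n.val n.val
    have h2 := key m.val n.val
    rw [if_pos rfl] at h1
    rw [if_neg hvne] at h2
    rw [← hfe] at h2
    rw [zero_sub, abs_neg] at h2
    have h4 : (1:ℝ) = |(1 - (c (f n.val)).2 n.val) + (c (f n.val)).2 n.val| := by norm_num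
    have h5 := abs_add_le (1 - (c (f n.val)).2 n.val) ((c (f n.val)).2 n.val)
    rw [← h4] at h5
    linarith
  have part2 : ∀ k : ℕ, 1/2 ≤ eTinf γ k ∧ eTinf γ k ≤ 1/2 + 1/2^(k-1) := by
    intro k
    unfold eTinf
    constructor
    · exact le_csInf ⟨_, memInf k⟩ fun ε hε => lbInf k ε hε
    · exact csInf_le ⟨0, fun ε hε => hε.1.le⟩ (memInf k)
  refine ⟨fun k _ => part1 k, fun k _ => part2 k, ?_⟩
  -- Part 3
  intro α hα hineq
  have h2γ : (2:ℝ)^(1/γ) = 2 * M := by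
    rw [hM, Real.rpow_sub two_pos, Real.rpow_one]
    field_simp
  by_contra hcon
  push_neg at hcon
  rw [h2γ] at hcon
  set d : ℝ := M - α/2 with hd
  have hdpos : 0 < d := by rw [hd]; linarith
  obtain ⟨t, ht⟩ := pow_unbounded_of_one_lt (α/d) (one_lt_two (α := ℝ))
  have hP : (0:ℝ) < 2^t := by positivity
  have hk := hineq (t+2) (by omega)
  rw [part1 (t+2)] at hk
  have h2 := (part2 (t+2)).2
  have hkk : M ≤ α * (1/2 + 1/2^(t+2-1)) :=
    hk.trans (mul_le_mul_of_nonneg_left h2 hα.le)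
  have hsimp : (t+2-1 : ℕ) = t+1 := rfl
  rw [hsimp] at hkk
  have hre : α * (1/2 + 1/2^(t+1)) = α/2 + α/(2*2^t) := by
    rw [pow_succ]; ring
  rw [hre] at hkk
  have hα2 : α < d * 2^t := by
    have := (div_lt_iff₀ hdpos).1 ht
    linarith [this]
  have hlt2 : α/(2*2^t) < d := by
    rw [div_lt_iff₀ (by positivity)]
    nlinarith
  rw [hd] at hlt2
  linarith
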